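/- Let Sys be an SPA process tree, a an action, B a nonempty a-synchronised set of leaves of Sys, and S the a-closure of B. Let r be the root of the smallest subtree of Sys containing all leaves of S. Then S is exactly the set of all leaves of the subtree rooted at r. -/

import Mathlib

/-!
An SPA system is modelled as a finite binary process tree: leaves are
sequential processes, each internal node is a parallel composition operator
labelled with a synchronisation set of actions.  Nodes (subtrees) of the tree
are identified with their positions, encoded as lists of Booleans (directions
from the root); a node `p` contains a node `q` iff `p` is a prefix of `q`.
-/

namespace SPA

/-- Binary process trees over a set of actions `Act`. -/
inductive PTree (Act : Type) : Type
  | leaf : PTree Act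
  | node : Set Act → PTree Act → PTree Act → PTree Act

variable {Act : Type}

/-- The subtree of a tree at a given position (if the position is valid). -/
def subtreeAt : PTree Act → List Bool → Option (PTree Act)
  | t, [] => some t
  | .leaf, _ :: _ => none
  | .node _ l r, b :: p => subtreeAt (if b then r else l) p

/-- `p` is a (valid position of a) node of `Sys`. -/
def IsNode (Sys : PTree Act) (p : List Bool) : Prop :=
  (subtreeAt Sys p).isSome

/-- `p` is a leaf of `Sys`, i.e. a sequential process. -/
def IsLeaf (Sys : PTree Act) (p : List Bool) : Prop :=
  subtreeAt Sys p = some .leaf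

/-- The node at position `p` is an internal node of type `||_a`
(its synchronisation set contains `a`). -/
def SyncAt (Sys : PTree Act) (p : List Bool) (a : Act) : Prop :=
  ∃ A l r, subtreeAt Sys p = some (.node A l r) ∧ a ∈ A

/-- The node at position `p` is an internal node of type `||_{¬a}`
(its synchronisation set does not contain `a`). -/
def NSyncAt (Sys : PTree Act) (p : List Bool) (a : Act) : Prop :=
  ∃ A l r, subtreeAt Sys p = some (.node A l r) ∧ a ∉ A

/-- Two nodes are disjoint iff neither subtree contains the other. -/
def DisjointNodes (p q : List Bool) : Prop :=
  ¬ p <+: q ∧ ¬ q <+: p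

/-- The longest common prefix of two positions: the join (lowest common
ancestor) of the two nodes, i.e. the root of the smallest subtree
containing both. -/
def lcp : List Bool → List Bool → List Bool
  | a :: as, b :: bs => if a = b then a :: lcp as bs else []
  | _, _ => []

/-- `q` lies strictly between `r` and `x` on the path from `r` down to `x`
(exclusive of both endpoints). -/
def StrictlyBetween (r x q : List Bool) : Prop :=
  r <+: q ∧ q <+: x ∧ q ≠ r ∧ q ≠ x

/-- The set of leaves of the subtree rooted at `p`. -/
def LeavesUnder (Sys : PTree Act) (p : List Bool) : Set (List Bool) :=
  {q | p <+: q ∧ IsLeaf Sys q}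


/-- A set `B` of leaves is `a`-synchronised: the join of every pair of distinct
leaves of `B` is of type `||_a`. -/
def ASynchronised (Sys : PTree Act) (a : Act) (B : Set (List Bool)) : Prop :=
  ∀ P ∈ B, ∀ Q ∈ B, P ≠ Q → SyncAt Sys (lcp P Q) a

/-- The `a`-closure of a set `B` of leaves: the least set containing `B` and
closed under the rule: if `P` is in the set and `Q` is a leaf distinct from `P`
whose join with `P` is of type `||_a`, then `Q` is in the set.
(This models the Involved Set of a transition.) -/
inductive AClosure (Sys : PTree Act) (a : Act) (B : Set (List Bool)) : List Bool → Prop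
  | base {P : List Bool} : P ∈ B → AClosure Sys a B P
  | step {P Q : List Bool} : AClosure Sys a B P → IsLeaf Sys Q → Q ≠ P →
      SyncAt Sys (lcp P Q) a → AClosure Sys a B Q

/-- `r` is the root of the smallest subtree containing all positions of `S`:
`r` is a common ancestor of all of `S`, and every common ancestor of all of `S`
contains the node `r`. -/
def IsJoinOf (S : Set (List Bool)) (r : List Bool) : Prop :=
  (∀ P ∈ S, r <+: P) ∧ ∀ q, (∀ P ∈ S, q <+: P) → q <+: r

/-! ### Auxiliary lemmas -/

lemma subtreeAt_append (t : PTree Act) (p q : List Bool) :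
    subtreeAt t (p ++ q) = (subtreeAt t p).bind (fun s => subtreeAt s q) := by
  induction p generalizing t with
  | nil => simp [subtreeAt]
  | cons b p ih =>
    cases t with
    | leaf => simp [subtreeAt]
    | node A l r =>
      simp only [List.cons_append, subtreeAt]
      exact ih _

lemma IsLeaf.isNode {Sys : PTree Act} {p : List Bool} (h : IsLeaf Sys p) :
    IsNode Sys p := by
  unfold IsNode; rw [h]; rfl

/-- A leaf has no valid strict descendants. -/
lemma leaf_no_desc {Sys : PTree Act} {p q : List Bool} (hp : IsLeaf Sys p)
    (hpq : p <+: q) (hq : IsNode Sys q) : q = p := by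
  obtain ⟨l, rfl⟩ := hpq
  cases l with
  | nil => simp
  | cons b l =>
    exfalso
    unfold IsNode at hq
    rw [subtreeAt_append, hp] at hq
    simp [subtreeAt] at hq

lemma lcp_comm : ∀ x y : List Bool, lcp x y = lcp y x
  | [], [] => rfl
  | [], _ :: _ => rfl
  | _ :: _, [] => rfl
  | a :: as, b :: bs => by
    by_cases h : a = b
    · subst h; simp [lcp, lcp_comm as bs]
    · simp [lcp, h, Ne.symm h]

lemma lcp_append : ∀ (r u v : List Bool), lcp (r ++ u) (r ++ v) = r ++ lcp u v
  | [], u, v => rfl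
  | b :: r, u, v => by simp [lcp, lcp_append r u v]

lemma lcp_cons_ne {b c : Bool} (u v : List Bool) (h : b ≠ c) :
    lcp (b :: u) (c :: v) = [] := by simp [lcp, h]

/-- The join of two leaves on opposite sides of `r` is `r` itself. -/
lemma lcp_cross {r x y : List Bool} {b c : Bool} (hb : r ++ [b] <+: x)
    (hc : r ++ [c] <+: y) (hbc : b ≠ c) : lcp x y = r := by
  obtain ⟨u, rfl⟩ := hb
  obtain ⟨v, rfl⟩ := hc
  rw [List.append_assoc, List.append_assoc, lcp_append]
  simp [lcp_cons_ne _ _ hbc]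

lemma prefix_of_append_singleton_prefix {r x : List Bool} {b c : Bool}
    (hb : r ++ [b] <+: x) (hc : r ++ [c] <+: x) : b = c := by
  obtain ⟨u, hu⟩ := hb
  obtain ⟨v, hv⟩ := hc
  rw [← hv] at hu
  simp [List.append_assoc] at hu
  exact hu.1

/-- All elements of the `a`-closure are leaves. -/
lemma AClosure.isLeaf {Sys : PTree Act} {a : Act} {B : Set (List Bool)}
    (hBleaf : ∀ P ∈ B, IsLeaf Sys P) {P : List Bool}
    (h : AClosure Sys a B P) : IsLeaf Sys P := by
  induction h with
  | base hP => exact hBleaf _ hP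
  | step _ hQ _ _ _ => exact hQ

/-- The edge relation: two distinct closure elements whose join is of type `||_a`. -/
def Edge (Sys : PTree Act) (a : Act) (B : Set (List Bool)) (P Q : List Bool) : Prop :=
  AClosure Sys a B P ∧ AClosure Sys a B Q ∧ P ≠ Q ∧ SyncAt Sys (lcp P Q) a

lemma Edge.symm' {Sys : PTree Act} {a : Act} {B : Set (List Bool)} :
    Symmetric (Edge Sys a B) := by
  rintro P Q ⟨h1, h2, h3, h4⟩
  exact ⟨h2, h1, h3.symm, by rwa [lcp_comm]⟩

/-- Every element of the closure is connected to every base element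
by a path of synced edges. -/
lemma connected {Sys : PTree Act} {a : Act} {B : Set (List Bool)}
    (hBsync : ASynchronised Sys a B) {P0 Q : List Bool} (hP0 : P0 ∈ B)
    (hQ : AClosure Sys a B Q) :
    Relation.ReflTransGen (Edge Sys a B) P0 Q := by
  induction hQ with
  | @base P hP =>
    by_cases h : P0 = P
    · subst h; exact Relation.ReflTransGen.refl
    · exact Relation.ReflTransGen.single
        ⟨AClosure.base hP0, AClosure.base hP, h, hBsync _ hP0 _ hP h⟩
  | @step P Q hP hQleaf hne hsync ih =>
    exact ih.tail ⟨hP, AClosure.step hP hQleaf hne hsync, fun h => hne h.symm, hsync⟩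

/-- Along any path of synced edges between opposite sides of `r`, some edge
crosses `r`; hence `r` is of type `||_a`. -/
lemma crossing {Sys : PTree Act} {a : Act} {B : Set (List Bool)} {r : List Bool}
    (hall : ∀ P, AClosure Sys a B P → ∃ b, r ++ [b] <+: P)
    {X Y : List Bool} {c : Bool}
    (path : Relation.ReflTransGen (Edge Sys a B) X Y)
    (hX : r ++ [c] <+: X) (hY : r ++ [!c] <+: Y) : SyncAt Sys r a := by
  induction path using Relation.ReflTransGen.head_induction_on with
  | refl =>
    exact absurd (prefix_of_append_singleton_prefix hX hY) (by simp)
  | @head X Z hXZ _ ih =>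
    obtain ⟨d, hd⟩ := hall Z hXZ.2.1
    by_cases hdc : d = c
    · exact ih (hdc ▸ hd)
    · have hdc' : c ≠ d := fun h => hdc h.symm
      have : lcp X Z = r := lcp_cross hX hd hdc'
      rw [← this]
      exact hXZ.2.2.2

/-- Let `B` be a nonempty `a`-synchronised set of leaves, `S` its
`a`-closure and `r` the root of the smallest subtree containing all leaves of
`S`.  Then `S` is exactly the set of all leaves of the subtree rooted at `r`. -/
theorem closure_eq_leaves_under_root (Sys : PTree Act) (a : Act) (B : Set (List Bool))
    (hBne : B.Nonempty) (hBleaf : ∀ P ∈ B, IsLeaf Sys P)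
    (hBsync : ASynchronised Sys a B)
    (r : List Bool) (hr : IsJoinOf {P | AClosure Sys a B P} r) :
    {P | AClosure Sys a B P} = LeavesUnder Sys r := by
  obtain ⟨P0, hP0⟩ := hBne
  have hP0S : AClosure Sys a B P0 := AClosure.base hP0
  apply Set.eq_of_subset_of_subset
  · intro P hP
    exact ⟨hr.1 P hP, hP.isLeaf hBleaf⟩
  · rintro Q ⟨hrQ, hQleaf⟩
    show AClosure Sys a B Q
    by_cases hQr : Q = r
    · -- `r` is itself a leaf: every closure element is a descendant of the
      -- leaf `r`, hence equals `r = Q`.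
      subst hQr
      have : P0 = Q := leaf_no_desc hQleaf (hr.1 P0 hP0S) (hP0S.isLeaf hBleaf).isNode
      exact this ▸ hP0S
    · -- `Q` properly extends `r`; write `Q = r ++ b :: _`.
      obtain ⟨u, hu⟩ := hrQ
      cases u with
      | nil => exact absurd (by simpa using hu.symm) hQr
      | cons b u =>
        have hQb : r ++ [b] <+: Q := ⟨u, by simpa using hu⟩
        -- every closure element properly extends `r`
        have hall : ∀ P, AClosure Sys a B P → ∃ d, r ++ [d] <+: P := by
          intro P hP
          obtain ⟨v, hv⟩ := hr.1 P hP
          cases v with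
          | nil =>
            exfalso
            have hPleaf : IsLeaf Sys P := hP.isLeaf hBleaf
            have hPr : P = r := by simpa using hv.symm
            subst hPr
            have : Q = P := leaf_no_desc hPleaf ⟨b :: u, hu⟩ hQleaf.isNode
            exact hQr this
          | cons d v => exact ⟨d, v, by simpa using hv⟩
        -- there is a closure element on the opposite side of `r` from `Q`
        have hP1 : ∃ P1, AClosure Sys a B P1 ∧ r ++ [!b] <+: P1 := by
          by_contra hcon
          push_neg at hcon
          have : r ++ [b] <+: r := by
            apply hr.2
            intro P hP
            obtain ⟨d, hd⟩ := hall P hP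
            cases d using Bool.rec with
            | _ =>
              first
              | (cases b using Bool.rec with
                  | _ => first | exact hd | exact absurd hd (hcon P hP))
          have := this.length_le
          simp at this
        obtain ⟨P1, hP1S, hP1side⟩ := hP1
        -- and one on the same side as `Q`
        have hP2 : ∃ P2, AClosure Sys a B P2 ∧ r ++ [b] <+: P2 := by
          by_contra hcon
          push_neg at hcon
          have : r ++ [!b] <+: r := by
            apply hr.2
            intro P hP
            obtain ⟨d, hd⟩ := hall P hP
            cases d using Bool.rec with
            | _ =>
              first
              | (cases b using Bool.rec with
                  | _ => first | exact hd | exact absurd hd (hcon P hP))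
          have := this.length_le
          simp at this
        obtain ⟨P2, hP2S, hP2side⟩ := hP2
        -- a path from `P1` to `P2` crosses `r`, so `r` is of type `||_a`
        have path1 : Relation.ReflTransGen (Edge Sys a B) P0 P1 :=
          connected hBsync hP0 hP1S
        have path2 : Relation.ReflTransGen (Edge Sys a B) P0 P2 :=
          connected hBsync hP0 hP2S
        have path : Relation.ReflTransGen (Edge Sys a B) P1 P2 :=
          Relation.ReflTransGen.trans
            ((@Std.Symm.symm _ _ (@Relation.ReflTransGen.symmetric _ _ ⟨Edge.symm'⟩)) _ _ path1) path2
        have hsyncr : SyncAt Sys r a :=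
          crossing hall path hP1side (by simpa using hP2side)
        -- finally, step from `P1` into `Q`
        have hQP1 : Q ≠ P1 := by
          intro h
          subst h
          exact absurd (prefix_of_append_singleton_prefix hQb hP1side) (by simp)
        have hlcp : lcp P1 Q = r := lcp_cross hP1side hQb (by simp)
        exact AClosure.step hP1S hQleaf hQP1 (hlcp ▸ hsyncr)

end SPA
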